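/- Let B be an oriented incidence matrix of a connected graph with diagonal weight matrix W having strictly positive entries, set L = B·W·Bᵀ with Moore–Penrose pseudoinverse L†, and for each edge k with endpoints u_k, v_k let R_k = (e_{u_k} − e_{v_k})ᵀ·L†·(e_{u_k} − e_{v_k}) be its effective resistance. Then for every edge i and every δ ∈ ℝ with |δ| < (max_k R_k)⁻¹, the perturbed Laplacian L + δ·(e_{u_i} − e_{v_i})·(e_{u_i} − e_{v_i})ᵀ is positive semidefinite. -/

import Mathlib

open Matrix

/-- `B` is an oriented incidence matrix: every column has exactly one `1`,
exactly one `-1`, and zeros elsewhere. -/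
def IsIncidenceMatrix {V E : Type*} (B : Matrix V E ℝ) : Prop :=
  ∀ e : E, ∃ i j : V, i ≠ j ∧ B i e = 1 ∧ B j e = -1 ∧
    ∀ k : V, k ≠ i → k ≠ j → B k e = 0

/-- if `R : E → ℝ` records the effective resistance across each edge, then
for every edge `i` and every `δ` with `|δ| < (max_k R_k)⁻¹`, the Laplacian perturbed by
`δ` on edge `i` remains positive semidefinite. -/
theorem single_edge_attack_uniform_margin
    {V E : Type*} [Fintype V] [Fintype E]
    [DecidableEq V] [DecidableEq E] [Nonempty V] [Nonempty E]
    (B : Matrix V E ℝ) (hB : IsIncidenceMatrix B)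
    (w : E → ℝ) (hw : ∀ e, 0 < w e)
    -- the graph is connected
    (hConn : LinearMap.ker Bᵀ.mulVecLin = Submodule.span ℝ {(fun _ : V => (1 : ℝ))})
    -- `Ld` is the Moore–Penrose pseudoinverse of `L = B·W·Bᵀ`
    (Ld : Matrix V V ℝ)
    (hp1 : (B * Matrix.diagonal w * Bᵀ) * Ld * (B * Matrix.diagonal w * Bᵀ) =
      B * Matrix.diagonal w * Bᵀ)
    (hp2 : Ld * (B * Matrix.diagonal w * Bᵀ) * Ld = Ld)
    (hp3 : ((B * Matrix.diagonal w * Bᵀ) * Ld)ᵀ = (B * Matrix.diagonal w * Bᵀ) * Ld)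
    (hp4 : (Ld * (B * Matrix.diagonal w * Bᵀ))ᵀ = Ld * (B * Matrix.diagonal w * Bᵀ))
    -- `R k` is the effective resistance between the endpoints of edge `k`
    (R : E → ℝ)
    (hR : ∀ k : E, ∀ u v : V, B u k = 1 → B v k = -1 →
      R k = (Pi.single u 1 - Pi.single v 1) ⬝ᵥ Ld.mulVec (Pi.single u 1 - Pi.single v 1)) :
    ∀ i : E, ∀ u v : V, B u i = 1 → B v i = -1 →
      ∀ δ : ℝ, |δ| < (Finset.univ.sup' Finset.univ_nonempty R)⁻¹ →
        (B * Matrix.diagonal w * Bᵀ +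
            δ • Matrix.vecMulVec (Pi.single u 1 - Pi.single v 1)
              (Pi.single u 1 - Pi.single v 1)).PosSemidef := by
  intro i u v hu hv δ hδ
  classical
  set L := B * Matrix.diagonal w * Bᵀ with hLdef
  set b : V → ℝ := Pi.single u 1 - Pi.single v 1 with hbdef
  have hLsym : Lᵀ = L := by
    rw [hLdef, Matrix.transpose_mul, Matrix.transpose_mul, Matrix.transpose_transpose,
      Matrix.diagonal_transpose, Matrix.mul_assoc]
  -- quadratic form of L
  have hQ : ∀ x : V → ℝ, x ⬝ᵥ L *ᵥ x = ∑ e, w e * ((Bᵀ *ᵥ x) e * (Bᵀ *ᵥ x) e) := by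
    intro x
    rw [hLdef, ← Matrix.mulVec_mulVec, Matrix.dotProduct_mulVec, ← Matrix.mulVec_transpose,
      Matrix.transpose_mul, Matrix.diagonal_transpose, ← Matrix.mulVec_mulVec]
    simp only [dotProduct]
    refine Finset.sum_congr rfl fun e _ => ?_
    rw [Matrix.mulVec_diagonal]
    ring
  have hQnn : ∀ x : V → ℝ, 0 ≤ x ⬝ᵥ L *ᵥ x := by
    intro x
    rw [hQ x]
    exact Finset.sum_nonneg fun e _ => mul_nonneg (hw e).le (mul_self_nonneg _)
  have hBone : Bᵀ *ᵥ (fun _ : V => (1 : ℝ)) = 0 := by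
    have h1 : (fun _ : V => (1 : ℝ)) ∈ Submodule.span ℝ {(fun _ : V => (1 : ℝ))} :=
      Submodule.mem_span_singleton_self _
    rw [← hConn, LinearMap.mem_ker, Matrix.mulVecLin_apply] at h1
    exact h1
  have hLone : L *ᵥ (fun _ : V => (1 : ℝ)) = 0 := by
    rw [hLdef, ← Matrix.mulVec_mulVec, ← Matrix.mulVec_mulVec, hBone]
    simp
  -- symmetry of the bilinear form
  have hBil : ∀ x z : V → ℝ, x ⬝ᵥ L *ᵥ z = z ⬝ᵥ L *ᵥ x := by
    intro x z
    rw [Matrix.dotProduct_mulVec, ← Matrix.mulVec_transpose, hLsym, dotProduct_comm]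
  -- b is orthogonal to the all-ones vector
  have honeb : (fun _ : V => (1 : ℝ)) ⬝ᵥ b = 0 := by
    have huv : u ≠ v := by
      intro h; rw [h, hv] at hu; norm_num at hu
    simp only [hbdef, dotProduct, Pi.sub_apply, one_mul, Finset.sum_sub_distrib,
      Finset.sum_pi_single', Finset.mem_univ, if_true]
    ring
  -- b is in the range of L :  L (Ld b) = b
  set y : V → ℝ := Ld *ᵥ b with hydef
  have hLy : L *ᵥ y = b := by
    set p : V → ℝ := b - L *ᵥ y with hpdef
    have hNL : (1 - L * Ld) * L = 0 := by
      rw [sub_mul, one_mul, Matrix.mul_assoc, ← Matrix.mul_assoc, hp1, sub_self]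
    have hLN : L * (1 - L * Ld) = 0 := by
      have h2 := congrArg Matrix.transpose hNL
      rw [Matrix.transpose_mul, Matrix.transpose_sub, Matrix.transpose_one, hp3, hLsym,
        Matrix.transpose_zero] at h2
      exact h2
    have hpN : p = (1 - L * Ld) *ᵥ b := by
      rw [hpdef, hydef, Matrix.mulVec_mulVec, Matrix.sub_mulVec, Matrix.one_mulVec]
    have hLp : L *ᵥ p = 0 := by
      rw [hpN, Matrix.mulVec_mulVec, hLN, Matrix.zero_mulVec]
    have hBp : Bᵀ *ᵥ p = 0 := by
      have hq : (0 : ℝ) = ∑ e, w e * ((Bᵀ *ᵥ p) e * (Bᵀ *ᵥ p) e) := by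
        rw [← hQ p, hLp, dotProduct_zero]
      have hall := (Finset.sum_eq_zero_iff_of_nonneg
        (fun e _ => mul_nonneg (hw e).le (mul_self_nonneg ((Bᵀ *ᵥ p) e)))).mp hq.symm
      funext e
      have he := hall e (Finset.mem_univ e)
      rcases mul_eq_zero.mp he with h | h
      · exact absurd h (hw e).ne'
      · exact mul_self_eq_zero.mp h
    have hmem : p ∈ Submodule.span ℝ {(fun _ : V => (1 : ℝ))} := by
      rw [← hConn, LinearMap.mem_ker, Matrix.mulVecLin_apply]
      exact hBp
    obtain ⟨c, hc⟩ := Submodule.mem_span_singleton.mp hmem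
    have honep : (fun _ : V => (1 : ℝ)) ⬝ᵥ p = 0 := by
      rw [hpdef, dotProduct_sub, honeb, Matrix.dotProduct_mulVec,
        ← Matrix.mulVec_transpose, hLsym, hLone]
      simp
    rw [← hc] at honep
    have hcard : (0 : ℝ) < (Fintype.card V : ℝ) := by
      exact_mod_cast Fintype.card_pos
    have hcc : (Fintype.card V : ℝ) * c = 0 := by
      rw [← honep]
      simp only [dotProduct, Pi.smul_apply, smul_eq_mul, one_mul, mul_one,
        Finset.sum_const, nsmul_eq_mul, Finset.card_univ]
    have hc0 : c = 0 := by
      rcases mul_eq_zero.mp hcc with h | h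
      · exact absurd h hcard.ne'
      · exact h
    have hp0 : p = 0 := by rw [← hc, hc0, zero_smul]
    have := sub_eq_zero.mp hp0
    exact this.symm
  -- the effective resistance of edge i
  have hRi : R i = b ⬝ᵥ y := by rw [hR i u v hu hv]
  have hQy : y ⬝ᵥ L *ᵥ y = R i := by
    rw [hLy, hRi, dotProduct_comm]
  -- Cauchy–Schwarz : (b ⬝ᵥ x)^2 ≤ R i * (x ⬝ᵥ L x)
  have hCS : ∀ x : V → ℝ, (b ⬝ᵥ x) * (b ⬝ᵥ x) ≤ R i * (x ⬝ᵥ L *ᵥ x) := by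
    intro x
    have hbx : b ⬝ᵥ x = x ⬝ᵥ L *ᵥ y := by
      rw [← hLy, dotProduct_comm]
    have hdisc : discrim (y ⬝ᵥ L *ᵥ y) (2 * (x ⬝ᵥ L *ᵥ y)) (x ⬝ᵥ L *ᵥ x) ≤ 0 := by
      apply discrim_le_zero
      intro t
      have hexp : (x + t • y) ⬝ᵥ L *ᵥ (x + t • y) =
          (y ⬝ᵥ L *ᵥ y) * (t * t) + 2 * (x ⬝ᵥ L *ᵥ y) * t + x ⬝ᵥ L *ᵥ x := by
        rw [Matrix.mulVec_add, dotProduct_add, add_dotProduct,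
          add_dotProduct, Matrix.mulVec_smul, dotProduct_smul,
          smul_dotProduct, smul_dotProduct, dotProduct_smul,
          hBil y x]
        simp only [smul_eq_mul]
        ring
      rw [← hexp]
      exact hQnn _
    rw [discrim, hQy] at hdisc
    rw [hbx]
    nlinarith [hdisc]
  -- positivity of the max resistance
  set M := Finset.univ.sup' Finset.univ_nonempty R with hMdef
  have hMpos : 0 < M := by
    by_contra h
    push_neg at h
    have : M⁻¹ ≤ 0 := inv_nonpos.mpr h
    linarith [abs_nonneg δ, hδ]
  have hRiM : R i ≤ M := Finset.le_sup' R (Finset.mem_univ i)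
  -- key pointwise inequality
  have hkey : ∀ x : V → ℝ, 0 ≤ x ⬝ᵥ L *ᵥ x + δ * ((b ⬝ᵥ x) * (b ⬝ᵥ x)) := by
    intro x
    rcases le_or_gt 0 δ with hδ0 | hδ0
    · have := hQnn x
      nlinarith [mul_self_nonneg (b ⬝ᵥ x)]
    · have h1 : (b ⬝ᵥ x) * (b ⬝ᵥ x) ≤ M * (x ⬝ᵥ L *ᵥ x) := by
        calc (b ⬝ᵥ x) * (b ⬝ᵥ x) ≤ R i * (x ⬝ᵥ L *ᵥ x) := hCS x
          _ ≤ M * (x ⬝ᵥ L *ᵥ x) := mul_le_mul_of_nonneg_right hRiM (hQnn x)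
      have h2 : δ * ((b ⬝ᵥ x) * (b ⬝ᵥ x)) ≥ δ * (M * (x ⬝ᵥ L *ᵥ x)) :=
        mul_le_mul_of_nonpos_left h1 hδ0.le
      have h3 : -M⁻¹ < δ := by
        have := neg_abs_le δ
        linarith [abs_lt.mp (lt_of_lt_of_le hδ ( le_refl _)) ]
      have h4 : 0 ≤ 1 + δ * M := by
        have : δ * M > -M⁻¹ * M := by
          exact mul_lt_mul_of_pos_right h3 hMpos
        rw [neg_mul, inv_mul_cancel₀ hMpos.ne'] at this
        linarith
      nlinarith [hQnn x, mul_nonneg h4 (hQnn x)]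
  rw [Matrix.posSemidef_iff_dotProduct_mulVec]
  constructor
  · -- Hermitian
    have ht : (L + δ • Matrix.vecMulVec b b)ᵀ = L + δ • Matrix.vecMulVec b b := by
      rw [Matrix.transpose_add, Matrix.transpose_smul, hLsym]
      congr 1
      ext k l
      simp [Matrix.vecMulVec_apply, mul_comm]
    rw [Matrix.IsHermitian]
    ext k l
    simpa using congrFun (congrFun ht k) l
  · intro x
    have hsx : star x = x := funext fun k => star_trivial (x k)
    rw [hsx, Matrix.add_mulVec, dotProduct_add]
    have h5 : (Matrix.vecMulVec b b) *ᵥ x = (b ⬝ᵥ x) • b := by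
      funext k
      simp only [Matrix.mulVec, Matrix.vecMulVec_apply, dotProduct, Pi.smul_apply,
        smul_eq_mul]
      rw [Finset.sum_mul]
      exact Finset.sum_congr rfl fun l _ => by ring
    have hvmv : x ⬝ᵥ (δ • Matrix.vecMulVec b b) *ᵥ x = δ * ((b ⬝ᵥ x) * (b ⬝ᵥ x)) := by
      rw [Matrix.smul_mulVec, dotProduct_smul, h5, dotProduct_smul,
        smul_eq_mul, smul_eq_mul, dotProduct_comm x b]
    rw [hvmv]
    exact hkey x
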